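/- Let δ ∈ (0,1) be a real number and let n, N, ℓ be positive integers with N ≤ 1000·ℓ·n^{(1−δ)ℓ} and ℓ ≥ 20. Sample N independent uniformly random functions f_1,…,f_N : Fin ℓ → Fin n and let S_i be the image of f_i. Then with probability at least 0.95, the following holds: for every nonempty subset M ⊆ Fin N with |M| ≤ n^{0.99δ}/ℓ, the union ∪_{i∈M} S_i has cardinality at least 0.01·δ·|M|·ℓ. -/

import Mathlib

open Finset Real

private lemma count_lemma {n N ℓ : ℕ} (M : Finset (Fin N)) (k : ℕ) (hk : k ≤ n) :
    (Finset.univ.filter (fun f : Fin N → Fin ℓ → Fin n =>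
        (M.biUnion (fun i => Finset.image (f i) Finset.univ)).card ≤ k)).card ≤
      n.choose k * ((k ^ ℓ) ^ M.card * (n ^ ℓ) ^ (N - M.card)) := by
  classical
  have hsub : Finset.univ.filter (fun f : Fin N → Fin ℓ → Fin n =>
        (M.biUnion (fun i => Finset.image (f i) Finset.univ)).card ≤ k) ⊆
      (Finset.powersetCard k (Finset.univ : Finset (Fin n))).biUnion (fun T =>
        Fintype.piFinset (fun i => if i ∈ M then Fintype.piFinset (fun _ : Fin ℓ => T)
          else Finset.univ)) := by
    intro f hf
    simp only [mem_filter, mem_univ, true_and] at hf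
    obtain ⟨T, hUT, -, hTcard⟩ := Finset.exists_subsuperset_card_eq
      (Finset.subset_univ (M.biUnion (fun i => Finset.image (f i) Finset.univ))) hf
      (by simpa using hk)
    refine mem_biUnion.2 ⟨T, Finset.mem_powersetCard.2 ⟨Finset.subset_univ T, hTcard⟩, ?_⟩
    refine Fintype.mem_piFinset.2 fun i => ?_
    by_cases hi : i ∈ M
    · simp only [hi, if_true]
      refine Fintype.mem_piFinset.2 fun j => ?_
      exact hUT (Finset.mem_biUnion.2 ⟨i, hi, Finset.mem_image_of_mem _ (mem_univ j)⟩)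
    · simp [hi]
  have hpiece : ∀ T ∈ Finset.powersetCard k (Finset.univ : Finset (Fin n)),
      (Fintype.piFinset (fun i => if i ∈ M then Fintype.piFinset (fun _ : Fin ℓ => T)
          else (Finset.univ : Finset (Fin ℓ → Fin n)))).card
        = (k ^ ℓ) ^ M.card * (n ^ ℓ) ^ (N - M.card) := by
    intro T hT
    have hTk : T.card = k := (Finset.mem_powersetCard.1 hT).2
    rw [Fintype.card_piFinset]
    have h1 : ∀ i : Fin N, ((if i ∈ M then Fintype.piFinset (fun _ : Fin ℓ => T)
        else (Finset.univ : Finset (Fin ℓ → Fin n)))).card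
        = if i ∈ M then k ^ ℓ else n ^ ℓ := by
      intro i
      by_cases hi : i ∈ M
      · simp [hi, Fintype.card_piFinset, hTk]
      · simp [hi]
    rw [Finset.prod_congr rfl (fun i _ => h1 i), ← Finset.prod_mul_prod_compl M]
    rw [Finset.prod_congr rfl (fun i hi => if_pos hi),
        Finset.prod_congr rfl (fun i hi => if_neg (Finset.mem_compl.1 hi)),
        Finset.prod_const, Finset.prod_const, Finset.card_compl, Fintype.card_fin]
  calc (Finset.univ.filter (fun f : Fin N → Fin ℓ → Fin n =>
        (M.biUnion (fun i => Finset.image (f i) Finset.univ)).card ≤ k)).card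
      ≤ _ := Finset.card_le_card hsub
    _ ≤ ∑ T ∈ Finset.powersetCard k (Finset.univ : Finset (Fin n)),
        (Fintype.piFinset (fun i => if i ∈ M then Fintype.piFinset (fun _ : Fin ℓ => T)
          else (Finset.univ : Finset (Fin ℓ → Fin n)))).card := Finset.card_biUnion_le
    _ = ∑ T ∈ Finset.powersetCard k (Finset.univ : Finset (Fin n)),
        ((k ^ ℓ) ^ M.card * (n ^ ℓ) ^ (N - M.card)) := Finset.sum_congr rfl hpiece
    _ = n.choose k * ((k ^ ℓ) ^ M.card * (n ^ ℓ) ^ (N - M.card)) := by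
        rw [Finset.sum_const, Finset.card_powersetCard, Finset.card_univ, Fintype.card_fin,
          smul_eq_mul]

private lemma perM_bound {δ : ℝ} (hδ0 : 0 < δ) (hδ1 : δ < 1) {n ℓ : ℕ} (hn : 0 < n)
    (hℓ : 0 < ℓ) (m Nm : ℕ) (hm : (m:ℝ) ≤ (n:ℝ) ^ (0.99 * δ) / ℓ) :
    ((n.choose ⌊0.01 * δ * m * ℓ⌋₊ : ℕ) : ℝ) * ((⌊0.01 * δ * m * ℓ⌋₊ : ℝ) ^ ℓ) ^ m
        * ((n:ℝ) ^ ℓ) ^ Nm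
      ≤ ((0.01:ℝ) ^ ℓ * (n:ℝ) ^ ((δ - 1) * ℓ)) ^ m * ((n:ℝ) ^ ℓ) ^ (m + Nm) := by
  have hx0 : (0:ℝ) < (n:ℝ) := by exact_mod_cast hn
  have hx1 : (1:ℝ) ≤ (n:ℝ) := by exact_mod_cast hn
  have hℓ0 : (0:ℝ) < (ℓ:ℝ) := by exact_mod_cast hℓ
  set x : ℝ := (n:ℝ) with hxdef
  set k : ℕ := ⌊0.01 * δ * m * ℓ⌋₊ with hkdef
  set s : ℝ := 0.01 * δ * m * ℓ with hsdef
  have hs0 : 0 ≤ s := by positivity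
  have hks : (k:ℝ) ≤ s := Nat.floor_le hs0
  have hp0 : (0:ℝ) ≤ x ^ (0.99 * δ) := (Real.rpow_pos_of_pos hx0 _).le
  have hml : (m:ℝ) * ℓ ≤ x ^ (0.99 * δ) := (le_div_iff₀ hℓ0).mp hm
  have hkb : (k:ℝ) ≤ 0.01 * x ^ (0.99 * δ) := by nlinarith
  have hA : ((n.choose k : ℕ) : ℝ) ≤ x ^ s := by
    calc ((n.choose k : ℕ) : ℝ) ≤ ((n ^ k : ℕ) : ℝ) := by exact_mod_cast Nat.choose_le_pow n k
      _ = x ^ ((k:ℕ):ℝ) := by rw [Real.rpow_natCast]; push_cast; ring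
      _ ≤ x ^ s := Real.rpow_le_rpow_of_exponent_le hx1 hks
  have hB : ((k:ℝ) ^ ℓ) ^ m ≤ (0.01 * x ^ (0.99 * δ)) ^ (ℓ * m) := by
    rw [← pow_mul]
    exact pow_le_pow_left₀ (by positivity) hkb _
  have hC : ((n.choose k : ℕ) : ℝ) * ((k:ℝ) ^ ℓ) ^ m * (x ^ ℓ) ^ Nm
      ≤ x ^ s * (0.01 * x ^ (0.99 * δ)) ^ (ℓ * m) * (x ^ ℓ) ^ Nm := by
    have hpos : (0:ℝ) ≤ (x ^ ℓ) ^ Nm := by positivity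
    exact mul_le_mul (mul_le_mul hA hB (by positivity) (by positivity)) le_rfl hpos
      (by positivity)
  refine hC.trans (le_of_eq ?_)
  have e1 : (x ^ (0.99*δ)) ^ (ℓ*m) = x ^ (0.99*δ*((ℓ*m : ℕ):ℝ)) := by
    rw [← Real.rpow_natCast (x ^ (0.99*δ)) (ℓ*m), ← Real.rpow_mul hx0.le]
  have e2 : (x ^ ℓ) ^ Nm = x ^ (((ℓ*Nm : ℕ):ℕ):ℝ) := by
    rw [← pow_mul, Real.rpow_natCast]
  have e3 : (x ^ ((δ-1)*ℓ)) ^ m = x ^ ((δ-1)*ℓ*(m:ℝ)) := by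
    rw [← Real.rpow_natCast (x ^ ((δ-1)*ℓ)) m, ← Real.rpow_mul hx0.le]
  have e4 : (x ^ ℓ) ^ (m+Nm) = x ^ (((ℓ*(m+Nm) : ℕ):ℕ):ℝ) := by
    rw [← pow_mul, Real.rpow_natCast]
  rw [mul_pow (0.01:ℝ) (x ^ (0.99*δ)), mul_pow ((0.01:ℝ)^ℓ) _ m, ← pow_mul (0.01:ℝ) ℓ m,
    e1, e2, e3, e4]
  calc x ^ s * ((0.01:ℝ)^(ℓ*m) * x ^ (0.99*δ*((ℓ*m : ℕ):ℝ))) * x ^ (((ℓ*Nm : ℕ):ℕ):ℝ)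
      = (0.01:ℝ)^(ℓ*m) * (x ^ s * x ^ (0.99*δ*((ℓ*m : ℕ):ℝ)) * x ^ (((ℓ*Nm : ℕ):ℕ):ℝ)) := by
        ring
    _ = (0.01:ℝ)^(ℓ*m) * x ^ (s + 0.99*δ*((ℓ*m : ℕ):ℝ) + (((ℓ*Nm : ℕ):ℕ):ℝ)) := by
        rw [← Real.rpow_add hx0, ← Real.rpow_add hx0]
    _ = (0.01:ℝ)^(ℓ*m) * x ^ ((δ-1)*ℓ*(m:ℝ) + (((ℓ*(m+Nm) : ℕ):ℕ):ℝ)) := by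
        congr 1
        push_cast
        rw [hsdef]
        ring
    _ = (0.01:ℝ)^(ℓ*m) * x ^ ((δ-1)*ℓ*(m:ℝ)) * x ^ (((ℓ*(m+Nm) : ℕ):ℕ):ℝ) := by
        rw [Real.rpow_add hx0, ← mul_assoc]

private lemma sum_bound (N : ℕ) (r : ℝ) (hr0 : 0 ≤ r) (hNr : (N:ℝ) * r ≤ 0.025)
    (𝓜 : Finset (Finset (Fin N))) (h𝓜 : ∀ M ∈ 𝓜, M.Nonempty) :
    ∑ M ∈ 𝓜, r ^ M.card ≤ 0.05 := by
  classical
  have step1 : ∑ M ∈ 𝓜, r ^ M.card ≤ ∑ M ∈ (Finset.univ : Finset (Finset (Fin N))).erase ∅,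
      r ^ M.card := by
    refine Finset.sum_le_sum_of_subset_of_nonneg ?_ (fun _ _ _ => pow_nonneg hr0 _)
    intro M hM
    exact Finset.mem_erase.2 ⟨(h𝓜 M hM).ne_empty, Finset.mem_univ M⟩
  have step2 : (1:ℝ) + ∑ M ∈ (Finset.univ : Finset (Finset (Fin N))).erase ∅, r ^ M.card
      = ∑ M ∈ (Finset.univ : Finset (Finset (Fin N))), r ^ M.card := by
    have h := Finset.add_sum_erase (Finset.univ : Finset (Finset (Fin N)))
      (fun M => r ^ M.card) (Finset.mem_univ ∅)
    simpa using h
  have step3 : ∑ M ∈ (Finset.univ : Finset (Finset (Fin N))), r ^ M.card = (r + 1)^N := by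
    have h := Finset.prod_add (fun _ : Fin N => r) (fun _ : Fin N => (1:ℝ)) Finset.univ
    simp [Finset.powerset_univ, Finset.prod_const] at h
    exact h.symm
  have step4 : (r + 1)^N ≤ Real.exp ((N:ℝ) * r) := by
    calc (r + 1)^N ≤ (Real.exp r)^N :=
          pow_le_pow_left₀ (by positivity) (Real.add_one_le_exp r) N
      _ = Real.exp ((N:ℝ) * r) := by rw [← Real.exp_nat_mul]
  have step5 : Real.exp ((N:ℝ) * r) ≤ Real.exp 0.025 := Real.exp_le_exp.2 hNr
  have step6 : Real.exp 0.025 ≤ 1.05 := by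
    have h1 : (0.975:ℝ) ≤ Real.exp (-0.025) := by
      have := Real.add_one_le_exp (-(0.025:ℝ)); linarith
    have h2 : Real.exp 0.025 = (Real.exp (-0.025))⁻¹ := by
      rw [← Real.exp_neg]; norm_num
    rw [h2]
    calc (Real.exp (-0.025))⁻¹ ≤ (0.975:ℝ)⁻¹ := inv_anti₀ (by norm_num) h1
      _ ≤ 1.05 := by norm_num
  linarith

/-- **Disperser property of random subsets.**
Sampling `N` independent uniformly random functions `f i : Fin ℓ → Fin n` (with `S i` the image
of `f i`), with probability at least `0.95` the following holds: for every nonempty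
`M ⊆ Fin N` with `|M| ≤ n^(0.99δ)/ℓ`, we have `|⋃_{i ∈ M} S i| ≥ 0.01·δ·|M|·ℓ`. -/
theorem stmt_3 (δ : ℝ) (hδ : δ ∈ Set.Ioo (0 : ℝ) 1) (n N ℓ : ℕ)
    (hn : 0 < n) (hN : 0 < N) (hℓ : 20 ≤ ℓ)
    (hNub : (N : ℝ) ≤ 1000 * ℓ * (n : ℝ) ^ ((1 - δ) * ℓ)) :
    ((Nat.card {f : Fin N → Fin ℓ → Fin n //
        ∀ M : Finset (Fin N), M.Nonempty → (M.card : ℝ) ≤ (n : ℝ) ^ (0.99 * δ) / ℓ →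
          0.01 * δ * M.card * ℓ
            ≤ ((M.biUnion (fun i => Finset.image (f i) Finset.univ)).card : ℝ)} : ℝ)
      / (Nat.card (Fin N → Fin ℓ → Fin n) : ℝ)) ≥ 0.95 := by
  classical
  obtain ⟨hδ0, hδ1⟩ := hδ
  have hℓ0 : 0 < ℓ := by omega
  have hℓR : (0:ℝ) < (ℓ:ℝ) := by exact_mod_cast hℓ0
  have hx0 : (0:ℝ) < (n:ℝ) := by exact_mod_cast hn
  have hx1 : (1:ℝ) ≤ (n:ℝ) := by exact_mod_cast hn
  set P : (Fin N → Fin ℓ → Fin n) → Prop := fun f =>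
    ∀ M : Finset (Fin N), M.Nonempty → (M.card : ℝ) ≤ (n : ℝ) ^ (0.99 * δ) / ℓ →
      0.01 * δ * M.card * ℓ
        ≤ ((M.biUnion (fun i => Finset.image (f i) Finset.univ)).card : ℝ) with hPdef
  have hsubty : Nat.card {f : Fin N → Fin ℓ → Fin n // P f} = (Finset.univ.filter P).card := by
    rw [Nat.card_eq_fintype_card, Fintype.card_subtype]
  have htot : Nat.card (Fin N → Fin ℓ → Fin n) = (n ^ ℓ) ^ N := by
    simp [Nat.card_eq_fintype_card]
  -- the parameter r
  set r : ℝ := (0.01:ℝ)^ℓ * (n:ℝ) ^ ((δ-1) * ℓ) with hrdef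
  have hr0 : (0:ℝ) ≤ r := by positivity
  have hNr : (N:ℝ) * r ≤ 0.025 := by
    have hone : (n:ℝ)^((1-δ)*(ℓ:ℝ)) * (n:ℝ)^((δ-1)*(ℓ:ℝ)) = 1 := by
      rw [← Real.rpow_add hx0, show (1-δ)*(ℓ:ℝ)+(δ-1)*(ℓ:ℝ) = 0 from by ring, Real.rpow_zero]
    have h2ℓ : (ℓ:ℝ) ≤ 2^ℓ := by exact_mod_cast (Nat.lt_two_pow_self (n := ℓ)).le
    calc (N:ℝ) * r ≤ (1000 * ℓ * (n:ℝ)^((1-δ)*ℓ)) * r := mul_le_mul_of_nonneg_right hNub hr0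
      _ = 1000 * (ℓ:ℝ) * (0.01:ℝ)^ℓ * ((n:ℝ)^((1-δ)*(ℓ:ℝ)) * (n:ℝ)^((δ-1)*(ℓ:ℝ))) := by
          rw [hrdef]; ring
      _ = 1000 * (ℓ:ℝ) * (0.01:ℝ)^ℓ := by rw [hone, mul_one]
      _ ≤ 1000 * (2:ℝ)^ℓ * (0.01:ℝ)^ℓ := by
          have : (0:ℝ) ≤ (0.01:ℝ)^ℓ := by positivity
          nlinarith
      _ = 1000 * (0.02:ℝ)^ℓ := by rw [mul_assoc, ← mul_pow]; norm_num
      _ ≤ 1000 * (0.02:ℝ)^20 := by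
          have := pow_le_pow_of_le_one (by norm_num : (0:ℝ) ≤ 0.02)
            (by norm_num : (0.02:ℝ) ≤ 1) hℓ
          nlinarith
      _ ≤ 0.025 := by norm_num
  -- the collection of relevant M and the bad events
  set 𝓜 : Finset (Finset (Fin N)) := Finset.univ.filter
    (fun M : Finset (Fin N) => M.Nonempty ∧ (M.card:ℝ) ≤ (n:ℝ)^(0.99*δ)/ℓ) with h𝓜def
  set badM : Finset (Fin N) → Finset (Fin N → Fin ℓ → Fin n) := fun M =>
    Finset.univ.filter (fun f : Fin N → Fin ℓ → Fin n =>
      (M.biUnion (fun i => Finset.image (f i) Finset.univ)).card ≤ ⌊0.01*δ*M.card*ℓ⌋₊)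
    with hbadMdef
  have hbadsub : Finset.univ.filter (fun f => ¬ P f) ⊆ 𝓜.biUnion badM := by
    intro f hf
    simp only [mem_filter, mem_univ, true_and, hPdef] at hf
    push_neg at hf
    obtain ⟨M, hM1, hM2, hM3⟩ := hf
    refine mem_biUnion.2 ⟨M, ?_, ?_⟩
    · rw [h𝓜def]; exact mem_filter.2 ⟨mem_univ M, hM1, hM2⟩
    · rw [hbadMdef]
      exact mem_filter.2 ⟨mem_univ f, Nat.le_floor hM3.le⟩
  -- per-M bound
  have key : ∀ M ∈ 𝓜, ((badM M).card : ℝ) ≤ r ^ M.card * ((n ^ ℓ) ^ N : ℕ) := by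
    intro M hM
    obtain ⟨hMne, hMle⟩ := (mem_filter.1 (h𝓜def ▸ hM)).2
    have hmN : M.card ≤ N := by
      have := Finset.card_le_univ M
      simpa using this
    -- k ≤ n
    have hkn : ⌊0.01*δ*M.card*ℓ⌋₊ ≤ n := by
      have h1 : ((⌊0.01*δ*M.card*ℓ⌋₊:ℕ):ℝ) ≤ 0.01*δ*M.card*ℓ := Nat.floor_le (by positivity)
      have h2 : (M.card:ℝ)*ℓ ≤ (n:ℝ)^(0.99*δ) := (le_div_iff₀ hℓR).1 hMle
      have h3 : (n:ℝ)^(0.99*δ) ≤ (n:ℝ)^(1:ℝ) :=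
        Real.rpow_le_rpow_of_exponent_le hx1 (by nlinarith)
      rw [Real.rpow_one] at h3
      have h4 : ((⌊0.01*δ*M.card*ℓ⌋₊:ℕ):ℝ) ≤ (n:ℝ) := by
        nlinarith [Real.rpow_pos_of_pos hx0 (0.99*δ)]
      exact_mod_cast h4
    have h1 := count_lemma (ℓ := ℓ) M ⌊0.01*δ*M.card*ℓ⌋₊ hkn
    have h2 := perM_bound hδ0 hδ1 hn hℓ0 M.card (N - M.card) hMle
    have hmm : M.card + (N - M.card) = N := Nat.add_sub_cancel' hmN
    simp only [hmm] at h2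
    calc ((badM M).card : ℝ)
        ≤ ((n.choose ⌊0.01*δ*M.card*ℓ⌋₊ : ℕ) : ℝ)
            * ((⌊0.01*δ*M.card*ℓ⌋₊ : ℝ) ^ ℓ) ^ M.card * ((n:ℝ) ^ ℓ) ^ (N - M.card) := by
          rw [hbadMdef]
          calc ((Finset.univ.filter (fun f : Fin N → Fin ℓ → Fin n =>
                (M.biUnion (fun i => Finset.image (f i) Finset.univ)).card
                  ≤ ⌊0.01*δ*M.card*ℓ⌋₊)).card : ℝ)
              ≤ ((n.choose ⌊0.01*δ*M.card*ℓ⌋₊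
                  * ((⌊0.01*δ*M.card*ℓ⌋₊ ^ ℓ) ^ M.card * (n ^ ℓ) ^ (N - M.card)) : ℕ) : ℝ) :=
                Nat.cast_le.2 h1
            _ = _ := by push_cast; ring
      _ ≤ ((0.01:ℝ) ^ ℓ * (n:ℝ) ^ ((δ - 1) * ℓ)) ^ M.card * ((n:ℝ) ^ ℓ) ^ N := h2
      _ = r ^ M.card * ((n ^ ℓ) ^ N : ℕ) := by rw [hrdef]; push_cast; ring
  -- total bad bound
  have hbad : ((Finset.univ.filter (fun f => ¬ P f)).card : ℝ) ≤ 0.05 * ((n ^ ℓ) ^ N : ℕ) := by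
    have c1 : ((Finset.univ.filter (fun f => ¬ P f)).card : ℝ)
        ≤ ∑ M ∈ 𝓜, ((badM M).card : ℝ) := by
      have := (Finset.card_le_card hbadsub).trans Finset.card_biUnion_le
      exact_mod_cast this
    have c2 : ∑ M ∈ 𝓜, ((badM M).card : ℝ) ≤ ∑ M ∈ 𝓜, r ^ M.card * ((n ^ ℓ) ^ N : ℕ) :=
      Finset.sum_le_sum key
    have c3 : ∑ M ∈ 𝓜, r ^ M.card * ((n ^ ℓ) ^ N : ℕ)
        = (∑ M ∈ 𝓜, r ^ M.card) * ((n ^ ℓ) ^ N : ℕ) := by rw [Finset.sum_mul]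
    have c4 : ∑ M ∈ 𝓜, r ^ M.card ≤ 0.05 := by
      refine sum_bound N r hr0 hNr 𝓜 ?_
      intro M hM
      exact ((mem_filter.1 (h𝓜def ▸ hM)).2).1
    have hT0 : (0:ℝ) ≤ ((n ^ ℓ) ^ N : ℕ) := by positivity
    calc ((Finset.univ.filter (fun f => ¬ P f)).card : ℝ)
        ≤ (∑ M ∈ 𝓜, r ^ M.card) * ((n ^ ℓ) ^ N : ℕ) := by rw [← c3]; linarith
      _ ≤ 0.05 * ((n ^ ℓ) ^ N : ℕ) := mul_le_mul_of_nonneg_right c4 hT0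
  -- conclude
  have hcards : (Finset.univ.filter P).card + (Finset.univ.filter (fun f => ¬ P f)).card
      = (n ^ ℓ) ^ N := by
    rw [Finset.card_filter_add_card_filter_not]
    simp
  have hT0' : (0:ℝ) < (((n ^ ℓ) ^ N : ℕ) : ℝ) := by
    have : 0 < (n ^ ℓ) ^ N := pow_pos (pow_pos hn ℓ) N
    exact_mod_cast this
  rw [ge_iff_le, hsubty, htot, le_div_iff₀ hT0']
  have hc' : ((Finset.univ.filter P).card : ℝ)
      + ((Finset.univ.filter (fun f => ¬ P f)).card : ℝ) = (((n ^ ℓ) ^ N : ℕ) : ℝ) := by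
    exact_mod_cast hcards
  linarith
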